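/- Let f be a strongly hyperbolic function, b, c ∈ ℝ with bc ≠ 0, and a > 0. Then the function ǧ(x) = a·f(x+b) + c − f(x) on (max{−b,0}, ∞) has at most two roots. -/

import Mathlib

open Filter Set Real

/-- A strongly hyperbolic function `f : (0,∞) → (0,∞)`. -/
def StronglyHyperbolic (f : ℝ → ℝ) : Prop :=
  (∀ x ∈ Set.Ioi (0:ℝ), 0 < f x) ∧
  Filter.Tendsto f (nhdsWithin 0 (Set.Ioi 0)) Filter.atTop ∧
  Filter.Tendsto f Filter.atTop (nhds 0) ∧
  StrictConvexOn ℝ (Set.Ioi 0) f ∧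
  (∀ b : ℝ, Filter.Tendsto (fun x => f (x + b) / f x) Filter.atTop (nhds 1)) ∧
  (∀ x ∈ Set.Ioi (0:ℝ), DifferentiableAt ℝ f x) ∧
  StrictConvexOn ℝ (Set.Ioi 0) (fun x => Real.log |deriv f x|)

/-- The derivative of a strongly hyperbolic function is negative. -/
lemma sh_deriv_neg (f : ℝ → ℝ) (hf : StronglyHyperbolic f) {t : ℝ} (ht : 0 < t) :
    deriv f t < 0 := by
  obtain ⟨hpos, -, h0, hconv, -, hdiff, -⟩ := hf
  have hft : 0 < f t := hpos t ht
  -- find s > t with f s < f t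
  have hev : ∀ᶠ x in atTop, f x < f t := h0.eventually (Iio_mem_nhds hft)
  obtain ⟨s0, hs0⟩ := hev.exists_forall_of_atTop
  set s : ℝ := max s0 (t + 1) with hs
  have hts : t < s := lt_of_lt_of_le (by linarith) (le_max_right _ _)
  have hfs : f s < f t := hs0 s (le_max_left _ _)
  have hslope := hconv.convexOn.deriv_le_slope (Set.mem_Ioi.2 ht)
    (Set.mem_Ioi.2 (ht.trans hts)) hts (hdiff t ht)
  rw [slope_def_field] at hslope
  have : (f s - f t) / (s - t) < 0 := div_neg_of_neg_of_pos (by linarith) (by linarith)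
  linarith

/-- Strict convexity implies the shifted difference is strictly increasing (positive shift). -/
lemma shift_diff_strictMono {L : ℝ → ℝ} (hL : StrictConvexOn ℝ (Set.Ioi 0) L) {b x y : ℝ}
    (hb : 0 < b) (hx : 0 < x) (hxy : x < y) :
    L (x + b) - L x < L (y + b) - L y := by
  have hy : 0 < y := hx.trans hxy
  have hxb : (0:ℝ) < x + b := by linarith
  have hyb : (0:ℝ) < y + b := by linarith
  have h1 := hL.secant_strict_mono_aux2 (Set.mem_Ioi.2 hx) (Set.mem_Ioi.2 hyb)
    (show x < x + b by linarith) (show x + b < y + b by linarith)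
  have h2 := hL.secant_strict_mono_aux3 (Set.mem_Ioi.2 hx) (Set.mem_Ioi.2 hyb)
    hxy (show y < y + b by linarith)
  have hxx : x + b - x = b := by ring
  have hyy : y + b - y = b := by ring
  rw [hxx] at h1
  rw [hyy] at h2
  have := h1.trans h2
  rwa [div_lt_div_iff_of_pos_right hb] at this

theorem stmt10 (f : ℝ → ℝ) (hf : StronglyHyperbolic f) (a b c : ℝ) (ha : 0 < a)
    (hb : b ≠ 0) (hc : c ≠ 0) :
    ∀ x ∈ Set.Ioi (max (-b) 0), ∀ y ∈ Set.Ioi (max (-b) 0), ∀ z ∈ Set.Ioi (max (-b) 0),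
      a * f (x + b) + c - f x = 0 → a * f (y + b) + c - f y = 0 → a * f (z + b) + c - f z = 0 →
      x = y ∨ x = z ∨ y = z := by
  set M : ℝ := max (-b) 0 with hM
  have hMb : -b ≤ M := le_max_left _ _
  have hM0 : (0:ℝ) ≤ M := le_max_right _ _
  have hdiff := hf.2.2.2.2.2.1
  set L : ℝ → ℝ := fun x => Real.log |deriv f x| with hLdef
  have hL : StrictConvexOn ℝ (Set.Ioi 0) L := hf.2.2.2.2.2.2
  -- positivity of points in Ioi M
  have hmem : ∀ {t : ℝ}, t ∈ Set.Ioi M → 0 < t ∧ 0 < t + b := by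
    intro t ht
    rw [Set.mem_Ioi] at ht
    constructor
    · exact lt_of_le_of_lt hM0 ht
    · have : -b < t := lt_of_le_of_lt hMb ht; linarith
  -- injectivity of roots of the derivative equation
  have hinj : ∀ u ∈ Set.Ioi M, ∀ v ∈ Set.Ioi M,
      a * deriv f (u + b) - deriv f u = 0 → a * deriv f (v + b) - deriv f v = 0 → u = v := by
    have key : ∀ t ∈ Set.Ioi M, a * deriv f (t + b) - deriv f t = 0 →
        L (t + b) - L t = -Real.log a := by
      intro t ht heq
      obtain ⟨ht0, htb0⟩ := hmem ht
      have h1 : deriv f t < 0 := sh_deriv_neg f hf ht0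
      have h2 : deriv f (t + b) < 0 := sh_deriv_neg f hf htb0
      have heq2 : a * (-deriv f (t + b)) = -deriv f t := by linarith
      have hlog : Real.log a + Real.log (-deriv f (t + b)) = Real.log (-deriv f t) := by
        rw [← Real.log_mul (ne_of_gt ha) (by linarith), heq2]
      have e1 : L (t + b) = Real.log (-deriv f (t + b)) := by
        simp only [hLdef, abs_of_neg h2]
      have e2 : L t = Real.log (-deriv f t) := by
        simp only [hLdef, abs_of_neg h1]
      rw [e1, e2]
      linarith
    intro u hu v hv hu' hv'
    by_contra hne
    have h1 := key u hu hu'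
    have h2 := key v hv hv'
    rcases lt_or_gt_of_ne hb with hbneg | hbpos
    · -- b < 0 : use the shift -b > 0 at points u+b, v+b
      rcases lt_or_gt_of_ne hne with huv | hvu
      · have := shift_diff_strictMono hL (b := -b) (by linarith) (hmem hu).2
          (show u + b < v + b by linarith)
        simp only [add_neg_cancel_right] at this
        linarith
      · have := shift_diff_strictMono hL (b := -b) (by linarith) (hmem hv).2
          (show v + b < u + b by linarith)
        simp only [add_neg_cancel_right] at this
        linarith
    · rcases lt_or_gt_of_ne hne with huv | hvu
      · have := shift_diff_strictMono hL hbpos (hmem hu).1 huv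
        linarith
      · have := shift_diff_strictMono hL hbpos (hmem hv).1 hvu
        linarith
  -- the function g and its derivative
  set g : ℝ → ℝ := fun t => a * f (t + b) + c - f t with hgdef
  have hgderiv : ∀ t ∈ Set.Ioi M, HasDerivAt g (a * deriv f (t + b) - deriv f t) t := by
    intro t ht
    obtain ⟨ht0, htb0⟩ := hmem ht
    have hd1 : HasDerivAt (fun s => f (s + b)) (deriv f (t + b)) t := by
      have := (hdiff (t + b) htb0).hasDerivAt.comp t ((hasDerivAt_id t).add_const b)
      rw [mul_one] at this
      exact this
    have := ((hd1.const_mul a).add_const c).sub (hdiff t ht0).hasDerivAt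
    exact this
  -- Rolle step: two roots give a root of the derivative in between
  have hrolle : ∀ p ∈ Set.Ioi M, ∀ q ∈ Set.Ioi M, p < q → g p = 0 → g q = 0 →
      ∃ u ∈ Set.Ioo p q, a * deriv f (u + b) - deriv f u = 0 := by
    intro p hp q hq hpq hgp hgq
    have hsub : Set.Icc p q ⊆ Set.Ioi M := fun t htt =>
      Set.mem_Ioi.2 (lt_of_lt_of_le (Set.mem_Ioi.1 hp) htt.1)
    have hcont : ContinuousOn g (Set.Icc p q) := fun t htt =>
      ((hgderiv t (hsub htt)).differentiableAt.continuousAt).continuousWithinAt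
    obtain ⟨u, hu, hu'⟩ := exists_deriv_eq_zero hpq hcont (hgp.trans hgq.symm)
    refine ⟨u, hu, ?_⟩
    have huM : u ∈ Set.Ioi M := Set.mem_Ioi.2 (lt_of_lt_of_le (Set.mem_Ioi.1 hp) (le_of_lt hu.1))
    rw [← (hgderiv u huM).deriv]
    exact hu'
  -- no three distinct ordered roots
  have hthree : ∀ p ∈ Set.Ioi M, ∀ q ∈ Set.Ioi M, ∀ r ∈ Set.Ioi M, p < q → q < r →
      g p = 0 → g q = 0 → g r = 0 → False := by
    intro p hp q hq r hr hpq hqr hgp hgq hgr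
    obtain ⟨u, hu, hu'⟩ := hrolle p hp q hq hpq hgp hgq
    obtain ⟨v, hv, hv'⟩ := hrolle q hq r hr hqr hgq hgr
    have huM : u ∈ Set.Ioi M := Set.mem_Ioi.2 (lt_of_lt_of_le (Set.mem_Ioi.1 hp) (le_of_lt hu.1))
    have hvM : v ∈ Set.Ioi M := Set.mem_Ioi.2 (lt_of_lt_of_le (Set.mem_Ioi.1 hq) (le_of_lt hv.1))
    have heq := hinj u huM v hvM hu' hv'
    have hlt : u < v := lt_trans hu.2 hv.1
    exact absurd heq (ne_of_lt hlt)
  intro x hx y hy z hz hgx hgy hgz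
  by_contra h
  push_neg at h
  obtain ⟨hxy, hxz, hyz⟩ := h
  rcases lt_or_gt_of_ne hxy with h1 | h1 <;> rcases lt_or_gt_of_ne hxz with h2 | h2 <;>
    rcases lt_or_gt_of_ne hyz with h3 | h3 <;>
  first
    | exact hthree x hx y hy z hz h1 h3 hgx hgy hgz
    | exact hthree x hx z hz y hy h2 h3 hgx hgz hgy
    | exact hthree z hz x hx y hy h2 h1 hgz hgx hgy
    | exact hthree y hy x hx z hz h1 h2 hgy hgx hgz
    | exact hthree y hy z hz x hx h3 h2 hgy hgz hgx
    | exact hthree z hz y hy x hx h3 h1 hgz hgy hgx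
    | linarith
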